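/- Let gᵢ = I₂^{⊗(i−1)} ⊗ R² ⊗ I₂^{⊗(n−i−1)} for 1 ≤ i ≤ n−1. Then gᵢ g_{i+1} = −g_{i+1} gᵢ, gᵢ gⱼ = gⱼ gᵢ when |i−j| ≥ 2, and gᵢ² = −I_{2ⁿ}. -/

import Mathlib

open Matrix Complex

/-- The 4×4 matrix `R = (1/√2)·[[1,0,0,1],[0,1,-1,0],[0,1,1,0],[-1,0,0,1]]`. -/
noncomputable def R4 : Matrix (Fin 4) (Fin 4) ℂ :=
  ((Real.sqrt 2 : ℝ) : ℂ)⁻¹ • !![1, 0, 0, 1; 0, 1, -1, 0; 0, 1, 1, 0; -1, 0, 0, 1]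

/-- `R` as a matrix on `ℂ² ⊗ ℂ²`, indexed by pairs; `p.1` is the first tensor
factor (the paper's basis ordering makes the second factor the major index). -/
noncomputable def R : Matrix (Fin 2 × Fin 2) (Fin 2 × Fin 2) ℂ := fun p q =>
  R4 ⟨p.1.val + 2 * p.2.val, by have := p.1.isLt; have := p.2.isLt; omega⟩
     ⟨q.1.val + 2 * q.2.val, by have := q.1.isLt; have := q.2.isLt; omega⟩

/-- The operator `I₂^{⊗ i} ⊗ M ⊗ I₂^{⊗ (n-i-2)}` acting on `(ℂ²)^{⊗ n}`
(0-indexed: `M` acts on tensor factors `i` and `i+1`). -/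
noncomputable def pairOp (n i : ℕ) (M : Matrix (Fin 2 × Fin 2) (Fin 2 × Fin 2) ℂ) :
    Matrix (Fin n → Fin 2) (Fin n → Fin 2) ℂ :=
  if h : i + 1 < n then fun x y =>
    M (x ⟨i, Nat.lt_of_succ_lt h⟩, x ⟨i + 1, h⟩) (y ⟨i, Nat.lt_of_succ_lt h⟩, y ⟨i + 1, h⟩) *
      ∏ j : Fin n, if (j : ℕ) = i ∨ (j : ℕ) = i + 1 then 1 else if x j = y j then 1 else 0
  else 0

/-- `gMat n i = I₂^{⊗ i} ⊗ R² ⊗ I₂^{⊗ (n-i-2)}` (0-indexed: `gMat n i` is the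
paper's `g_{i+1}`, acting on tensor factors `i` and `i+1`). -/
noncomputable def gMat (n i : ℕ) : Matrix (Fin n → Fin 2) (Fin n → Fin 2) ℂ :=
  pairOp n i (R * R)

noncomputable def sgn (v : Fin 2) : ℂ := if v = 0 then 1 else -1

lemma RRapply (p q : Fin 2 × Fin 2) :
    (R * R) p q = if q = (p.1 + 1, p.2 + 1) then sgn p.1 else 0 := by
  have h2 : ((Real.sqrt 2 : ℝ) : ℂ)⁻¹ * ((Real.sqrt 2 : ℝ) : ℂ)⁻¹ = 2⁻¹ := by
    rw [← mul_inv, ← Complex.ofReal_mul, Real.mul_self_sqrt (by norm_num)]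
    norm_num
  obtain ⟨a, b⟩ := p; obtain ⟨c, d⟩ := q
  fin_cases a <;> fin_cases b <;> fin_cases c <;> fin_cases d <;>
    simp [Matrix.mul_apply, Fintype.sum_prod_type, Fin.sum_univ_two, R, R4, sgn, h2,
      Prod.ext_iff] <;> norm_num

def flipF (n i : ℕ) (x : Fin n → Fin 2) : Fin n → Fin 2 := fun j =>
  if (j : ℕ) = i ∨ (j : ℕ) = i + 1 then x j + 1 else x j

lemma gMat_apply (n i : ℕ) (h : i + 1 < n) (x y : Fin n → Fin 2) :
    gMat n i x y = if y = flipF n i x then sgn (x ⟨i, Nat.lt_of_succ_lt h⟩) else 0 := by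
  unfold gMat pairOp
  erw [dif_pos h]
  rw [RRapply]
  by_cases hy : y = flipF n i x
  · subst hy
    have hc1 : flipF n i x ⟨i, Nat.lt_of_succ_lt h⟩ = x ⟨i, Nat.lt_of_succ_lt h⟩ + 1 := by
      simp [flipF]
    have hc2 : flipF n i x ⟨i + 1, h⟩ = x ⟨i + 1, h⟩ + 1 := by
      simp [flipF]
    rw [hc1, hc2, if_pos rfl, if_pos rfl]
    have : (∏ j : Fin n, if (j : ℕ) = i ∨ (j : ℕ) = i + 1 then (1 : ℂ)
        else if x j = flipF n i x j then 1 else 0) = 1 := by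
      apply Finset.prod_eq_one
      intro j _
      by_cases hj : (j : ℕ) = i ∨ (j : ℕ) = i + 1
      · rw [if_pos hj]
      · rw [if_neg hj]
        have : flipF n i x j = x j := by simp [flipF, hj]
        rw [this, if_pos rfl]
    rw [this, mul_one]
  · rw [if_neg hy]
    by_cases hall : ∀ j : Fin n, ¬((j : ℕ) = i ∨ (j : ℕ) = i + 1) → x j = y j
    · -- then the first factor must be 0, else y = flipF
      have hfst : ¬((y ⟨i, Nat.lt_of_succ_lt h⟩, y ⟨i + 1, h⟩) =
          (x ⟨i, Nat.lt_of_succ_lt h⟩ + 1, x ⟨i + 1, h⟩ + 1)) := by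
        intro hc
        apply hy
        funext j
        by_cases hj : (j : ℕ) = i ∨ (j : ℕ) = i + 1
        · rcases hj with hj | hj
          · have : j = ⟨i, Nat.lt_of_succ_lt h⟩ := Fin.ext hj
            rw [this]
            simp only [flipF, Prod.mk.injEq] at hc ⊢
            simp [hc.1]
          · have : j = ⟨i + 1, h⟩ := Fin.ext hj
            rw [this]
            simp only [flipF, Prod.mk.injEq] at hc ⊢
            simp [hc.2]
        · have : flipF n i x j = x j := by simp [flipF, hj]
          rw [this]
          exact (hall j hj).symm
      rw [if_neg hfst, zero_mul]
    · push_neg at hall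
      obtain ⟨j, hj, hxy⟩ := hall
      have : (∏ k : Fin n, if (k : ℕ) = i ∨ (k : ℕ) = i + 1 then (1 : ℂ)
          else if x k = y k then 1 else 0) = 0 := by
        apply Finset.prod_eq_zero (Finset.mem_univ j)
        rw [if_neg (not_or.mpr hj), if_neg hxy]
      rw [this, mul_zero]

lemma gMat_mul_apply (n i : ℕ) (h : i + 1 < n)
    (A : Matrix (Fin n → Fin 2) (Fin n → Fin 2) ℂ) (x y : Fin n → Fin 2) :
    (gMat n i * A) x y = sgn (x ⟨i, Nat.lt_of_succ_lt h⟩) * A (flipF n i x) y := by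
  rw [Matrix.mul_apply]
  rw [Finset.sum_eq_single (flipF n i x)]
  · rw [gMat_apply n i h, if_pos rfl]
  · intro z _ hz
    rw [gMat_apply n i h, if_neg hz, zero_mul]
  · intro hmem; exact absurd (Finset.mem_univ _) hmem

lemma flipF_comm (n i j : ℕ) (x : Fin n → Fin 2) :
    flipF n i (flipF n j x) = flipF n j (flipF n i x) := by
  funext k
  simp only [flipF]
  split_ifs <;> rfl

lemma flipF_apply_ne (n i : ℕ) (x : Fin n → Fin 2) (k : Fin n)
    (h1 : (k : ℕ) ≠ i) (h2 : (k : ℕ) ≠ i + 1) : flipF n i x k = x k := by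
  simp [flipF, h1, h2]

lemma flipF_apply_eq (n i : ℕ) (x : Fin n → Fin 2) (k : Fin n)
    (h1 : (k : ℕ) = i ∨ (k : ℕ) = i + 1) : flipF n i x k = x k + 1 := by
  simp [flipF, h1]

lemma sgn_anti (a b : Fin 2) : sgn a * sgn (b + 1) = -(sgn b * sgn a) := by
  have h0 : (0 + 1 : Fin 2) = 1 := rfl
  have h1 : (1 + 1 : Fin 2) = 0 := rfl
  fin_cases a <;> fin_cases b <;> simp [sgn, h0, h1] <;> norm_num

lemma sgn_sq (a : Fin 2) : sgn a * sgn (a + 1) = -1 := by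
  have h0 : (0 + 1 : Fin 2) = 1 := rfl
  have h1 : (1 + 1 : Fin 2) = 0 := rfl
  fin_cases a <;> simp [sgn, h0, h1] <;> norm_num

/-- the `gᵢ` satisfy `gᵢg_{i+1} = −g_{i+1}gᵢ`, `gᵢgⱼ = gⱼgᵢ` for
`|i−j| ≥ 2`, and `gᵢ² = −I_{2ⁿ}` (0-indexed; valid indices are `i ≤ n-2`). -/
theorem stmt9 (n : ℕ) (hn : 2 ≤ n) :
    (∀ i, i + 2 ≤ n - 1 → gMat n i * gMat n (i + 1) = -(gMat n (i + 1) * gMat n i)) ∧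
    (∀ i j, i + 2 ≤ j → j + 1 ≤ n - 1 → gMat n i * gMat n j = gMat n j * gMat n i) ∧
    (∀ i, i + 1 ≤ n - 1 → gMat n i * gMat n i = -1) := by
  refine ⟨?_, ?_, ?_⟩
  · intro i hi
    have hi1 : i + 1 < n := by omega
    have hi2 : i + 1 + 1 < n := by omega
    ext x y
    rw [Matrix.neg_apply, gMat_mul_apply n i hi1, gMat_mul_apply n (i+1) hi2,
      gMat_apply n (i+1) hi2, gMat_apply n i hi1, flipF_comm]
    have e1 : flipF n i x ⟨i + 1, Nat.lt_of_succ_lt hi2⟩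
        = x ⟨i + 1, Nat.lt_of_succ_lt hi2⟩ + 1 :=
      flipF_apply_eq _ _ _ _ (Or.inr rfl)
    have e2 : flipF n (i+1) x ⟨i, Nat.lt_of_succ_lt hi1⟩ = x ⟨i, Nat.lt_of_succ_lt hi1⟩ := by
      apply flipF_apply_ne <;> simp <;> omega
    rw [e1, e2]
    by_cases hy : y = flipF n i (flipF n (i+1) x)
    · rw [if_pos hy, if_pos hy]
      exact sgn_anti _ _
    · rw [if_neg hy, if_neg hy]
      ring
  · intro i j hij hj
    have hi1 : i + 1 < n := by omega
    have hj1 : j + 1 < n := by omega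
    ext x y
    rw [gMat_mul_apply n i hi1, gMat_mul_apply n j hj1,
      gMat_apply n j hj1, gMat_apply n i hi1, flipF_comm]
    have e1 : flipF n i x ⟨j, Nat.lt_of_succ_lt hj1⟩ = x ⟨j, Nat.lt_of_succ_lt hj1⟩ := by
      apply flipF_apply_ne <;> simp <;> omega
    have e2 : flipF n j x ⟨i, Nat.lt_of_succ_lt hi1⟩ = x ⟨i, Nat.lt_of_succ_lt hi1⟩ := by
      apply flipF_apply_ne <;> simp <;> omega
    rw [e1, e2]
    by_cases hy : y = flipF n i (flipF n j x)
    · rw [if_pos hy, if_pos hy]; ring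
    · rw [if_neg hy, if_neg hy]; ring
  · intro i hi
    have hi1 : i + 1 < n := by omega
    ext x y
    rw [gMat_mul_apply n i hi1, gMat_apply n i hi1]
    have hff : flipF n i (flipF n i x) = x := by
      funext k
      simp only [flipF]
      split_ifs
      · have : ∀ v : Fin 2, v + 1 + 1 = v := by decide
        exact this _
      · rfl
    have e1 : flipF n i x ⟨i, Nat.lt_of_succ_lt hi1⟩ = x ⟨i, Nat.lt_of_succ_lt hi1⟩ + 1 :=
      flipF_apply_eq _ _ _ _ (Or.inl rfl)
    rw [hff, e1]
    by_cases hy : y = x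
    · rw [if_pos hy, sgn_sq, hy]
      simp [Matrix.neg_apply, Matrix.one_apply_eq]
    · rw [if_neg hy, mul_zero]
      simp [Matrix.neg_apply, Matrix.one_apply_ne' hy]
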